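/- Fix a prime q, an integer d ≥ 2, t = ⌈2·log_q d + 2⌉, d distinct monic irreducible polynomials p_1, …, p_d of degree t over F = F_q, and a positive integer n. The set 𝓛 = { L_B(β) : (B, β) is a good pair } has size at most q^{4dt}. -/

import Mathlib

open Finset Polynomial

/-- The value at `1/q` of a polynomial over `ZMod q`, with coefficients lifted to
`{0, 1, …, q−1} ⊆ ℝ`. -/
noncomputable def pev (q : ℕ) (g : Polynomial (ZMod q)) : ℝ :=
  ∑ j ∈ Finset.range (g.natDegree + 1), ((g.coeff j).val : ℝ) / (q : ℝ) ^ j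

/-- `r_p(f)`: writing `f = f₀ + f₁ p + f₂ p² + ⋯` in base `p` (each `fᵢ` of degree `< t`,
obtained as `(f /ₘ p^i) %ₘ p`), the real number
`(f₀(1/q) + f₁(1/q) q^(−t) + f₂(1/q) q^(−2t) + ⋯)/q`. -/
noncomputable def rp (q t : ℕ) (p f : Polynomial (ZMod q)) : ℝ :=
  (∑ i ∈ Finset.range (f.natDegree + 1), pev q ((f /ₘ p ^ i) %ₘ p) / (q : ℝ) ^ (i * t)) / q

/-- The map `r : F[x] → [0,1)^d`, `r(f) = (r_{p 1}(f), …, r_{p d}(f))`. -/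
noncomputable def rmap (q t d : ℕ) (p : Fin d → Polynomial (ZMod q))
    (f : Polynomial (ZMod q)) : Fin d → ℝ :=
  fun i => rp q t (p i) f

/-- The canonical box `∏ i, [a i / q^(t * k i), (a i + 1) / q^(t * k i))`. -/
def canonicalBox (q t d : ℕ) (k a : Fin d → ℕ) : Set (Fin d → ℝ) :=
  Set.univ.pi fun i =>
    Set.Ico ((a i : ℝ) / (q : ℝ) ^ (t * k i)) (((a i : ℝ) + 1) / (q : ℝ) ^ (t * k i))

/-- A basic box in base `q` in `[0,1]^d` of volume `q^(-n)`. -/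
def IsBasicBox (q d n : ℕ) (β : Set (Fin d → ℝ)) : Prop :=
  ∃ k a : Fin d → ℕ, (∀ i, a i + 1 ≤ q ^ k i) ∧ (∑ i, k i) = n ∧
    β = Set.univ.pi fun i =>
      Set.Ico ((a i : ℝ) / (q : ℝ) ^ k i) (((a i : ℝ) + 1) / (q : ℝ) ^ k i)

/-- A canonical box with parameter `t`, as a set. -/
def IsCanonicalBox (q t d : ℕ) (B : Set (Fin d → ℝ)) : Prop :=
  ∃ k a : Fin d → ℕ, (∀ i, a i + 1 ≤ q ^ (t * k i)) ∧ B = canonicalBox q t d k a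

/-- `(B, β)` is a good pair: `β` is a basic box of volume `q^(-n)` and `B` is the
smallest canonical box containing `β`. -/
def IsGoodPair (q t d n : ℕ) (B β : Set (Fin d → ℝ)) : Prop :=
  IsBasicBox q d n β ∧ IsCanonicalBox q t d B ∧ β ⊆ B ∧
    ∀ B' : Set (Fin d → ℝ), IsCanonicalBox q t d B' → β ⊆ B' → B ⊆ B'

/-- The polynomial obtained from `f` by setting the coefficients of
`x^0, x^1, …, x^(c-1)` to zero. -/
noncomputable def eraseLow (q : ℕ) (c : ℕ) (f : Polynomial (ZMod q)) : Polynomial (ZMod q) :=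
  ∑ j ∈ f.support.filter (fun j => c ≤ j), Polynomial.monomial j (f.coeff j)

section Digits
variable (q t : ℕ) [Fact q.Prime] (p : Polynomial (ZMod q))

/-- the `j`-th base-`q` digit (0-indexed) of `rp q t p f` after the decimal point. -/
noncomputable def dgt (f : Polynomial (ZMod q)) (j : ℕ) : ℕ :=
  (((f /ₘ p ^ (j / t)) %ₘ p).coeff (j % t)).val

/-- the integer formed by the first `m` digits. -/
noncomputable def valm (f : Polynomial (ZMod q)) (m : ℕ) : ℕ :=
  ∑ j ∈ Finset.range m, dgt q t p f j * q ^ (m - 1 - j)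

variable {q t p}

lemma q2 : 2 ≤ q := (Fact.out : q.Prime).two_le

lemma dgt_lt (f : Polynomial (ZMod q)) (j : ℕ) : dgt q t p f j < q := by
  haveI : NeZero q := ⟨(Fact.out : q.Prime).ne_zero⟩
  exact ZMod.val_lt _

lemma dgt_eq_zero (hp : p.Monic) (hpt : p.natDegree = t) (ht : 1 ≤ t)
    (f : Polynomial (ZMod q)) {j : ℕ} (hj : (f.natDegree + 1) * t ≤ j) :
    dgt q t p f j = 0 := by
  have hle : f.natDegree + 1 ≤ j / t := (Nat.le_div_iff_mul_le ht).2 hj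
  have hdiv : f /ₘ p ^ (j / t) = 0 := by
    rw [Polynomial.divByMonic_eq_zero_iff (hp.pow _)]
    have h1 : (p ^ (j / t)).degree = (((j / t) * t : ℕ) : WithBot ℕ) := by
      rw [degree_eq_natDegree (hp.pow _).ne_zero, natDegree_pow, hpt]
    rw [h1]
    calc f.degree ≤ (f.natDegree : WithBot ℕ) := degree_le_natDegree
      _ < (((j / t) * t : ℕ) : WithBot ℕ) := by
          have : f.natDegree + 1 ≤ (j / t) * t :=
            le_trans hle (Nat.le_mul_of_pos_right _ ht)
          exact_mod_cast this
  simp [dgt, hdiv]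

lemma valm_split (f : Polynomial (ZMod q)) {m M : ℕ} (h : m ≤ M) :
    valm q t p f M = valm q t p f m * q ^ (M - m)
      + ∑ j ∈ Finset.Ico m M, dgt q t p f j * q ^ (M - 1 - j) := by
  rw [valm, ← Finset.sum_range_add_sum_Ico _ h, valm, Finset.sum_mul]
  congr 1
  refine Finset.sum_congr rfl fun j hj => ?_
  rw [Finset.mem_range] at hj
  rw [mul_assoc, ← pow_add]
  congr 2
  omega

lemma mid_le (f : Polynomial (ZMod q)) (c : ℕ) : ∀ m : ℕ,
    ∑ j ∈ Finset.Ico m (m + c), dgt q t p f j * q ^ (m + c - 1 - j) ≤ q ^ c - 1 := by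
  induction c with
  | zero => intro m; simp
  | succ c ih =>
      intro m
      have hmm : m < m + (c + 1) := by omega
      rw [Finset.sum_eq_sum_Ico_succ_bot hmm,
        show m + (c + 1) = (m + 1) + c from by omega,
        show (m + 1) + c - 1 - m = c from by omega]
      have h1 : ∑ j ∈ Finset.Ico (m + 1) ((m + 1) + c),
          dgt q t p f j * q ^ ((m + 1) + c - 1 - j) ≤ q ^ c - 1 := ih (m + 1)
      have h2 : dgt q t p f m ≤ q - 1 := by have := dgt_lt (p := p) (t := t) f m; omega
      have hq : 2 ≤ q := q2 (q := q)
      have h3 : 1 ≤ q ^ c := Nat.one_le_pow _ _ (by omega)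
      have h4 : q ^ (c + 1) = q * q ^ c := by ring
      have h5 : dgt q t p f m * q ^ c ≤ (q - 1) * q ^ c :=
        Nat.mul_le_mul_right _ h2
      have h6 : (q - 1) * q ^ c = q * q ^ c - q ^ c := Nat.sub_one_mul q (q ^ c)
      have h7 : q ^ c ≤ q * q ^ c := Nat.le_mul_of_pos_left _ (by omega)
      omega

end Digits

section RP
variable {q t : ℕ} [Fact q.Prime] {p : Polynomial (ZMod q)}

lemma sum_range_mul_sum {M : Type*} [AddCommMonoid M] (F : ℕ → M) (n t : ℕ) :
    ∑ i ∈ Finset.range n, ∑ j ∈ Finset.range t, F (i * t + j)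
      = ∑ k ∈ Finset.range (n * t), F k := by
  induction n with
  | zero => simp
  | succ n ih =>
      rw [Finset.sum_range_succ, ih, show (n + 1) * t = n * t + t from by ring,
        Finset.sum_range_add]

lemma dgt_block (f : Polynomial (ZMod q)) {i j : ℕ} (hj : j < t) :
    dgt q t p f (i * t + j) = (((f /ₘ p ^ i) %ₘ p).coeff j).val := by
  have h0 : 0 < t := by omega
  rw [dgt, mul_comm i t, Nat.mul_add_div h0, Nat.mul_add_mod, Nat.div_eq_of_lt hj,
    Nat.mod_eq_of_lt hj, add_zero]

lemma pev_eq {g : Polynomial (ZMod q)} (hg : g.natDegree < t) :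
    pev q g = ∑ j ∈ Finset.range t, ((g.coeff j).val : ℝ) / (q : ℝ) ^ j := by
  refine Finset.sum_subset (Finset.range_subset_range.2 hg) fun x _ hx => ?_
  rw [Finset.mem_range, not_lt] at hx
  rw [coeff_eq_zero_of_natDegree_lt (by omega), ZMod.val_zero]
  simp

lemma rp_eq_dgt_sum (hp : p.Monic) (hpt : p.natDegree = t) (ht : 1 ≤ t)
    (f : Polynomial (ZMod q)) :
    rp q t p f = ∑ k ∈ Finset.range ((f.natDegree + 1) * t),
      (dgt q t p f k : ℝ) / (q : ℝ) ^ (k + 1) := by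
  have hp1 : p ≠ 1 := by
    intro h; rw [h, natDegree_one] at hpt; omega
  rw [← sum_range_mul_sum (fun k => (dgt q t p f k : ℝ) / (q : ℝ) ^ (k + 1))]
  rw [rp, Finset.sum_div]
  refine Finset.sum_congr rfl fun i _ => ?_
  have hmod : ((f /ₘ p ^ i) %ₘ p).natDegree < t :=
    hpt ▸ natDegree_modByMonic_lt _ hp hp1
  rw [pev_eq hmod, Finset.sum_div, Finset.sum_div]
  refine Finset.sum_congr rfl fun j hj => ?_
  rw [Finset.mem_range] at hj
  rw [dgt_block f hj, div_div, div_div, ← pow_succ, ← pow_add,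
    show j + (i * t + 1) = i * t + j + 1 from by omega]
end RP

section RP2
variable {q t : ℕ} [Fact q.Prime] {p : Polynomial (ZMod q)}

lemma rp_eq_valm (hp : p.Monic) (hpt : p.natDegree = t) (ht : 1 ≤ t)
    (f : Polynomial (ZMod q)) {M : ℕ} (hM : (f.natDegree + 1) * t ≤ M) :
    rp q t p f = (valm q t p f M : ℝ) / (q : ℝ) ^ M := by
  have hq : 2 ≤ q := q2 (q := q)
  have hq0 : (0:ℝ) < q := by exact_mod_cast by omega
  rw [rp_eq_dgt_sum hp hpt ht,
    Finset.sum_subset (Finset.range_subset_range.2 hM) (fun x _ hx => by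
      rw [dgt_eq_zero hp hpt ht f (by rw [Finset.mem_range, not_lt] at hx; omega)]
      simp)]
  rw [valm]; push_cast
  rw [Finset.sum_div]
  refine Finset.sum_congr rfl fun k hk => ?_
  rw [Finset.mem_range] at hk
  rw [div_eq_div_iff (by positivity) (by positivity), mul_assoc, ← pow_add,
    show M - 1 - k + (k + 1) = M from by omega]

lemma valm_le_rp (hp : p.Monic) (hpt : p.natDegree = t) (ht : 1 ≤ t)
    (f : Polynomial (ZMod q)) (m : ℕ) :
    (valm q t p f m : ℝ) / (q : ℝ) ^ m ≤ rp q t p f ∧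
      rp q t p f < ((valm q t p f m : ℝ) + 1) / (q : ℝ) ^ m := by
  have hq : 2 ≤ q := q2 (q := q)
  have hq0 : (0:ℝ) < q := by exact_mod_cast by omega
  set M := max m ((f.natDegree + 1) * t) with hMdef
  have hm : m ≤ M := le_max_left _ _
  have hM : (f.natDegree + 1) * t ≤ M := le_max_right _ _
  have hsplit := valm_split (p := p) (t := t) f hm
  have hmid := mid_le (p := p) (t := t) f (M - m) m
  rw [show m + (M - m) = M from by omega] at hmid
  have hpow1 : 1 ≤ q ^ (M - m) := Nat.one_le_pow _ _ (by omega)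
  have nat1 : valm q t p f m * q ^ (M - m) ≤ valm q t p f M := by omega
  have nat2 : valm q t p f M + 1 ≤ (valm q t p f m + 1) * q ^ (M - m) := by
    have : (valm q t p f m + 1) * q ^ (M - m)
        = valm q t p f m * q ^ (M - m) + q ^ (M - m) := by ring
    omega
  have hqM : (q:ℝ) ^ M = q ^ (M - m) * q ^ m := by
    rw [← pow_add]; congr 1; omega
  have c1 : ((valm q t p f m : ℝ)) * (q:ℝ) ^ (M - m) ≤ (valm q t p f M : ℝ) := by
    exact_mod_cast Nat.cast_le.2 nat1
  have c2 : (valm q t p f M : ℝ) + 1 ≤ ((valm q t p f m : ℝ) + 1) * (q:ℝ) ^ (M - m) := by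
    exact_mod_cast Nat.cast_le.2 nat2
  rw [rp_eq_valm hp hpt ht f hM]
  constructor
  · rw [div_le_div_iff₀ (by positivity) (by positivity), hqM]
    nlinarith [pow_pos hq0 m]
  · rw [div_lt_div_iff₀ (by positivity) (by positivity), hqM]
    nlinarith [pow_pos hq0 m]

lemma rp_mem_Ico_iff (hp : p.Monic) (hpt : p.natDegree = t) (ht : 1 ≤ t)
    (f : Polynomial (ZMod q)) (a m : ℕ) :
    rp q t p f ∈ Set.Ico ((a : ℝ) / (q : ℝ) ^ m) (((a : ℝ) + 1) / (q : ℝ) ^ m)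
      ↔ valm q t p f m = a := by
  have hq : 2 ≤ q := q2 (q := q)
  have hq0 : (0:ℝ) < (q:ℝ) ^ m := by positivity
  have hb := valm_le_rp hp hpt ht f m
  constructor
  · rintro ⟨h1, h2⟩
    have l1 : (a:ℝ) < (valm q t p f m : ℝ) + 1 := by
      have := lt_of_le_of_lt h1 hb.2
      rw [div_lt_div_iff₀ hq0 hq0] at this
      exact lt_of_mul_lt_mul_right this (le_of_lt hq0)
    have l2 : (valm q t p f m : ℝ) < (a:ℝ) + 1 := by
      have := lt_of_le_of_lt hb.1 h2
      rw [div_lt_div_iff₀ hq0 hq0] at this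
      exact lt_of_mul_lt_mul_right this (le_of_lt hq0)
    have l1' : a < valm q t p f m + 1 := by exact_mod_cast l1
    have l2' : valm q t p f m < a + 1 := by exact_mod_cast l2
    omega
  · rintro rfl
    exact ⟨hb.1, hb.2⟩
end RP2

section Blocks
variable {q : ℕ} [Fact q.Prime] {p : Polynomial (ZMod q)}

lemma mod_add_mul (hp : p.Monic) (x z : Polynomial (ZMod q)) :
    (x + p * z) %ₘ p = x %ₘ p :=
  (div_modByMonic_unique (x /ₘ p + z) (x %ₘ p) hp
    ⟨by linear_combination modByMonic_add_div x p, degree_modByMonic_lt x hp⟩).2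

lemma add_mod (hp : p.Monic) (x y : Polynomial (ZMod q)) :
    (x + y) %ₘ p = x %ₘ p + y %ₘ p :=
  (div_modByMonic_unique (x /ₘ p + y /ₘ p) (x %ₘ p + y %ₘ p) hp
    ⟨by linear_combination modByMonic_add_div x p + modByMonic_add_div y p,
      lt_of_le_of_lt (degree_add_le _ _)
        (max_lt (degree_modByMonic_lt x hp) (degree_modByMonic_lt y hp))⟩).2

lemma div_add_mul (hp : p.Monic) (k : ℕ) (A g w : Polynomial (ZMod q)) :
    (A + g * (p ^ k * w)) /ₘ p ^ k = A /ₘ p ^ k + g * w :=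
  (div_modByMonic_unique _ (A %ₘ p ^ k) (hp.pow k)
    ⟨by linear_combination modByMonic_add_div A (p ^ k),
      degree_modByMonic_lt A (hp.pow k)⟩).1

lemma blk_lower (hp : p.Monic) {i k : ℕ} (hik : i < k) (f w : Polynomial (ZMod q)) :
    (f + w * p ^ k) /ₘ p ^ i %ₘ p = f /ₘ p ^ i %ₘ p := by
  have hpk : p ^ i * p ^ (k - i) = p ^ k := by rw [← pow_add]; congr 1; omega
  have h1 : (f + w * p ^ k) /ₘ p ^ i = f /ₘ p ^ i + w * p ^ (k - i) :=
    (div_modByMonic_unique _ (f %ₘ p ^ i) (hp.pow i)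
      ⟨by linear_combination modByMonic_add_div f (p ^ i) + w * hpk,
        degree_modByMonic_lt f (hp.pow i)⟩).1
  obtain ⟨c, hc⟩ : ∃ c, k - i = c + 1 := ⟨k - i - 1, by omega⟩
  rw [h1, show w * p ^ (k - i) = p * (w * p ^ c) from by rw [hc, pow_succ]; ring,
    mod_add_mul hp]

lemma mod_mul_mod (hp : p.Monic) (g w : Polynomial (ZMod q)) :
    (g * (w %ₘ p)) %ₘ p = (g * w) %ₘ p := by
  conv_rhs => rw [← modByMonic_add_div w p]
  rw [mul_add, show g * (p * (w /ₘ p)) = p * (g * (w /ₘ p)) from by ring, mod_add_mul hp]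

end Blocks

section Key
variable {q t : ℕ} [Fact q.Prime] {p : Polynomial (ZMod q)}

lemma key (hp : p.Monic) (hpt : p.natDegree = t) (ht : 1 ≤ t)
    (A g W : Polynomial (ZMod q)) (K mβ a aβ : ℕ)
    (hm1 : t * K ≤ mβ) (hm2 : mβ < t * K + t)
    (hA : valm q t p A (t * K) = a)
    (h3 : a * q ^ (mβ - t * K) ≤ aβ) :
    (rp q t p (A + g * (p ^ K * W)) ∈
        Set.Ico ((aβ : ℝ) / (q:ℝ) ^ mβ) (((aβ:ℝ) + 1) / (q:ℝ) ^ mβ))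
      ↔ ∑ r ∈ Finset.range (mβ - t * K),
          ((((A /ₘ p ^ K) %ₘ p) + (g * W) %ₘ p).coeff r).val
            * q ^ (mβ - t * K - 1 - r) = aβ - a * q ^ (mβ - t * K) := by
  set f := A + g * (p ^ K * W) with hf
  have hsplit := valm_split (t := t) (p := p) f hm1
  have hlow : valm q t p f (t * K) = valm q t p A (t * K) := by
    refine Finset.sum_congr rfl fun j hj => ?_
    rw [Finset.mem_range] at hj
    have hjt : j / t < K := (Nat.div_lt_iff_lt_mul ht).2 (by rw [Nat.mul_comm K t]; exact hj)
    congr 1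
    show dgt q t p f j = dgt q t p A j
    rw [dgt, dgt, hf, show A + g * (p ^ K * W) = A + g * W * p ^ K from by ring,
      blk_lower hp hjt]
  have hmid_eq : ∑ j ∈ Finset.Ico (t * K) mβ, dgt q t p f j * q ^ (mβ - 1 - j)
      = ∑ r ∈ Finset.range (mβ - t * K),
          ((((A /ₘ p ^ K) %ₘ p) + (g * W) %ₘ p).coeff r).val
            * q ^ (mβ - t * K - 1 - r) := by
    rw [Finset.sum_Ico_eq_sum_range]
    refine Finset.sum_congr rfl fun r hr => ?_
    rw [Finset.mem_range] at hr
    have hrt : r < t := by omega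
    have h1 : dgt q t p f (t * K + r) = (((f /ₘ p ^ K) %ₘ p).coeff r).val := by
      rw [show t * K + r = K * t + r from by ring, dgt_block f hrt]
    have h2 : f /ₘ p ^ K = A /ₘ p ^ K + g * W := by
      rw [hf, div_add_mul hp]
    rw [h1, h2, add_mod hp, show mβ - 1 - (t * K + r) = mβ - t * K - 1 - r from by omega]
  rw [rp_mem_Ico_iff hp hpt ht f aβ mβ, hsplit, hlow, hA, hmid_eq]
  omega

end Key

noncomputable def polyOf (q t : ℕ) (c : Fin t → ZMod q) : Polynomial (ZMod q) :=
  ∑ j : Fin t, Polynomial.monomial (j : ℕ) (c j)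

lemma polyOf_coeff_fun {q t : ℕ} (v : Polynomial (ZMod q)) (hv : v.natDegree < t) :
    polyOf q t (fun j => v.coeff j) = v := by
  rw [polyOf, ← Finset.sum_range (fun j => Polynomial.monomial j (v.coeff j))]
  exact (Polynomial.as_sum_range' v t hv).symm

def LData (q t d : ℕ) : Type :=
  (Fin d → Fin t) × (Fin d → Fin (q ^ t)) × (Fin d → Fin t → ZMod q) × (Fin d → Fin t → ZMod q)

noncomputable def Phi (q t d : ℕ) (p : Fin d → Polynomial (ZMod q)) (dat : LData q t d) :
    Set (Polynomial (ZMod q)) :=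
  {g | ∀ i, ∑ r ∈ Finset.range (dat.1 i : ℕ),
      ((polyOf q t (dat.2.2.1 i) + (g * polyOf q t (dat.2.2.2 i)) %ₘ p i).coeff r).val
        * q ^ ((dat.1 i : ℕ) - 1 - r) = (dat.2.1 i : ℕ)}

lemma Ico_div_nonempty (x : ℕ) {c : ℝ} (hc : 0 < c) :
    (Set.Ico ((x:ℝ) / c) (((x:ℝ) + 1) / c)).Nonempty :=
  Set.nonempty_Ico.2 (by rw [div_lt_div_iff₀ hc hc]; nlinarith)

lemma lo_lt_hi (x : ℕ) {c : ℝ} (hc : 0 < c) : (x:ℝ)/c < ((x:ℝ)+1)/c := by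
  rw [div_lt_div_iff₀ hc hc]; nlinarith


/-- Claim 1: the family `𝓛 = {L_B(β) : (B, β) a good pair}` has size at
most `q^(4dt)`. -/
theorem stmt11 (q d t n : ℕ) [Fact q.Prime] (hd : 2 ≤ d) (hn : 0 < n)
    (ht : t = ⌈2 * Real.log d / Real.log q + 2⌉₊)
    (p : Fin d → Polynomial (ZMod q))
    (hmonic : ∀ i, (p i).Monic) (hirr : ∀ i, Irreducible (p i))
    (hdeg : ∀ i, (p i).natDegree = t) (hinj : Function.Injective p)
    (𝓛 : Set (Set (Polynomial (ZMod q))))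
    (h𝓛 : 𝓛 = {L | ∃ (k a : Fin d → ℕ) (β : Set (Fin d → ℝ)) (A : Polynomial (ZMod q)),
      (∀ i, a i + 1 ≤ q ^ (t * k i)) ∧
      IsGoodPair q t d n (canonicalBox q t d k a) β ∧
      A.degree < ((t * ∑ i, k i : ℕ) : WithBot ℕ) ∧
      rmap q t d p A ∈ canonicalBox q t d k a ∧
      L = {g : Polynomial (ZMod q) |
            rmap q t d p (A + g * ∏ i, p i ^ k i) ∈ β}}) :
    𝓛.Finite ∧ 𝓛.ncard ≤ q ^ (4 * d * t) := by
  classical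
  have hq : q.Prime := Fact.out
  haveI : NeZero q := ⟨hq.ne_zero⟩
  have hq2 : 2 ≤ q := hq.two_le
  have hq0 : (0:ℝ) < q := by exact_mod_cast hq.pos
  have hq1 : (1:ℝ) < q := by exact_mod_cast hq.one_lt
  have ht1 : 1 ≤ t := by
    rcases Nat.eq_zero_or_pos t with h0 | h
    · exfalso
      have i0 : Fin d := ⟨0, by omega⟩
      have h1 : p i0 = 1 := (hmonic i0).natDegree_eq_zero.1
        (by rw [hdeg i0, h0])
      exact (hirr i0).not_isUnit (h1 ▸ isUnit_one)
    · exact h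
  have hpne1 : ∀ i, p i ≠ 1 := fun i h => by
    have h2 := hdeg i; rw [h, natDegree_one] at h2; omega
  haveI : Finite (LData q t d) := by unfold LData; infer_instance
  have hsub : 𝓛 ⊆ Set.range (Phi q t d p) := by
    rw [h𝓛]
    rintro L ⟨k, a, β, A, h1, ⟨hbasic, -, hsubβ, hmin⟩, -, hmem, rfl⟩
    obtain ⟨kβ, aβ, haβ, -, hβ⟩ := hbasic
    simp only [canonicalBox, Set.mem_univ_pi, rmap] at hmem
    rw [hβ] at hsubβ
    simp only [canonicalBox] at hsubβ
    have hcoord : ∀ j, Set.Ico ((aβ j:ℝ)/(q:ℝ)^(kβ j)) (((aβ j:ℝ)+1)/(q:ℝ)^(kβ j))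
        ⊆ Set.Ico ((a j:ℝ)/(q:ℝ)^(t*k j)) (((a j:ℝ)+1)/(q:ℝ)^(t*k j)) := by
      rcases Set.univ_pi_subset_univ_pi_iff.1 hsubβ with h | ⟨j, hj⟩
      · exact h
      · exact absurd hj (Ico_div_nonempty _ (by positivity)).ne_empty
    have hlohi : ∀ j, (a j:ℝ)/(q:ℝ)^(t*k j) ≤ (aβ j:ℝ)/(q:ℝ)^(kβ j) ∧
        ((aβ j:ℝ)+1)/(q:ℝ)^(kβ j) ≤ ((a j:ℝ)+1)/(q:ℝ)^(t*k j) := fun j =>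
      (Set.Ico_subset_Ico_iff
        (lo_lt_hi _ (by positivity))).1 (hcoord j)
    have hF1 : ∀ j, t * k j ≤ kβ j := by
      intro j
      obtain ⟨hlo, hhi⟩ := hlohi j
      rw [add_div, add_div] at hhi
      have hlen : (1:ℝ)/(q:ℝ)^(kβ j) ≤ 1/(q:ℝ)^(t * k j) := by linarith
      have hpow : (q:ℝ)^(t*k j) ≤ (q:ℝ)^(kβ j) := by
        exact le_of_one_div_le_one_div (by positivity) hlen
      exact (pow_le_pow_iff_right₀ hq1).1 hpow
    have hF2 : ∀ j, kβ j < t * k j + t := by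
      intro i
      by_contra hcon
      push_neg at hcon
      set m := kβ i with hmdef
      set T := t * k i + t with hTdef
      have hqpow : 0 < q ^ (m - T) := pow_pos (by omega) _
      have haβm : aβ i < q ^ m := by
        have h := haβ i; rw [← hmdef] at h; omega
      set k' := Function.update k i (k i + 1) with hk'
      set a' := Function.update a i (aβ i / q ^ (m - T)) with ha'
      have hk'i : k' i = k i + 1 := Function.update_self _ _ _
      have ha'i : a' i = aβ i / q ^ (m - T) := Function.update_self _ _ _
      have hTk' : t * k' i = T := by rw [hk'i, hTdef]; ring
      have hdivlt : aβ i / q ^ (m - T) < q ^ T := (Nat.div_lt_iff_lt_mul hqpow).2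
        (by rw [← pow_add, show T + (m - T) = m from by omega]; exact haβm)
      have hqmT : (q:ℝ)^m = (q:ℝ)^(m-T) * (q:ℝ)^T := by
        rw [← pow_add]; congr 1; omega
      have hbound : ∀ j, a' j + 1 ≤ q ^ (t * k' j) := by
        intro j
        by_cases hji : j = i
        · subst hji; rw [hTk', ha'i]; omega
        · rw [hk', ha', Function.update_of_ne hji, Function.update_of_ne hji]
          exact h1 j
      have hsub' : β ⊆ canonicalBox q t d k' a' := by
        rw [hβ]
        refine Set.pi_mono fun j _ => ?_
        by_cases hji : j = i
        · subst hji
          rw [hTk', ha'i]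
          refine Set.Ico_subset_Ico ?_ ?_
          · rw [div_le_div_iff₀ (by positivity) (by positivity), hqmT, ← mul_assoc]
            have hc : ((aβ j / q ^ (m - T) * q ^ (m - T) : ℕ) : ℝ) ≤ (aβ j : ℝ) :=
              Nat.cast_le.2 (Nat.div_mul_le_self _ _)
            push_cast at hc
            exact mul_le_mul_of_nonneg_right hc (by positivity)
          · rw [div_le_div_iff₀ (by positivity) (by positivity), hqmT, ← mul_assoc]
            have hn2 : aβ j + 1 ≤ (aβ j / q ^ (m - T) + 1) * q ^ (m - T) := by
              have h5 := (Nat.div_lt_iff_lt_mul hqpow).1 (Nat.lt_succ_self (aβ j / q ^ (m - T)))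
              rw [Nat.succ_eq_add_one] at h5
              omega
            have hc : ((aβ j + 1 : ℕ) : ℝ) ≤ (((aβ j / q ^ (m - T) + 1) * q ^ (m - T) : ℕ) : ℝ) :=
              Nat.cast_le.2 hn2
            push_cast at hc
            exact mul_le_mul_of_nonneg_right hc (by positivity)
        · rw [hk', ha', Function.update_of_ne hji, Function.update_of_ne hji]
          exact hcoord j
      have hBB' := hmin _ ⟨k', a', hbound, rfl⟩ hsub'
      simp only [canonicalBox] at hBB'
      have hcoordB : Set.Ico ((a i:ℝ)/(q:ℝ)^(t*k i)) (((a i:ℝ)+1)/(q:ℝ)^(t*k i))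
          ⊆ Set.Ico ((a' i:ℝ)/(q:ℝ)^(t*k' i)) (((a' i:ℝ)+1)/(q:ℝ)^(t*k' i)) := by
        rcases Set.univ_pi_subset_univ_pi_iff.1 hBB' with h | ⟨j, hj⟩
        · exact h i
        · exact absurd hj (Ico_div_nonempty _ (by positivity)).ne_empty
      rw [hTk'] at hcoordB
      obtain ⟨hlo', hhi'⟩ := (Set.Ico_subset_Ico_iff
        (lo_lt_hi _ (by positivity))).1 hcoordB
      rw [add_div, add_div] at hhi'
      have hlen : (1:ℝ)/(q:ℝ)^(t * k i) ≤ 1/(q:ℝ)^T := by linarith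
      have hpow : (q:ℝ)^T ≤ (q:ℝ)^(t * k i) := by
        exact le_of_one_div_le_one_div (by positivity) hlen
      have := (pow_le_pow_iff_right₀ hq1).1 hpow
      omega
    have hF3 : ∀ j, a j * q ^ (kβ j - t * k j) ≤ aβ j := by
      intro j
      obtain ⟨hlo, -⟩ := hlohi j
      rw [div_le_div_iff₀ (by positivity) (by positivity)] at hlo
      have hqm : (q:ℝ)^(kβ j) = (q:ℝ)^(kβ j - t * k j) * (q:ℝ)^(t * k j) := by
        rw [← pow_add]; congr 1; have := hF1 j; omega
      rw [hqm, ← mul_assoc] at hlo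
      have h6 : (a j : ℝ) * (q:ℝ)^(kβ j - t*k j) ≤ (aβ j:ℝ) :=
        le_of_mul_le_mul_right hlo (by positivity)
      exact_mod_cast h6
    have hF4 : ∀ j, aβ j + 1 ≤ (a j + 1) * q ^ (kβ j - t * k j) := by
      intro j
      obtain ⟨-, hhi⟩ := hlohi j
      rw [div_le_div_iff₀ (by positivity) (by positivity)] at hhi
      have hqm : (q:ℝ)^(kβ j) = (q:ℝ)^(kβ j - t * k j) * (q:ℝ)^(t * k j) := by
        rw [← pow_add]; congr 1; have := hF1 j; omega
      rw [hqm, ← mul_assoc] at hhi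
      have h6 : (aβ j : ℝ) + 1 ≤ ((a j:ℝ) + 1) * (q:ℝ)^(kβ j - t*k j) :=
        le_of_mul_le_mul_right hhi (by positivity)
      exact_mod_cast h6
    have hA3 : ∀ j, valm q t (p j) A (t * k j) = a j := fun j =>
      (rp_mem_Ico_iff (hmonic j) (hdeg j) ht1 A (a j) (t * k j)).1 (hmem j)
    refine ⟨⟨fun i => ⟨kβ i - t * k i, by have := hF1 i; have := hF2 i; omega⟩,
      fun i => ⟨aβ i - a i * q ^ (kβ i - t * k i), by
        have h4 := hF4 i
        have hspos : 0 < q ^ (kβ i - t * k i) := pow_pos (by omega) _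
        have hsle : q ^ (kβ i - t * k i) ≤ q ^ t :=
          Nat.pow_le_pow_right (by omega) (by have := hF1 i; have := hF2 i; omega)
        have hexp : (a i + 1) * q ^ (kβ i - t * k i)
            = a i * q ^ (kβ i - t * k i) + q ^ (kβ i - t * k i) := by ring
        omega⟩,
      fun i j => ((A /ₘ p i ^ k i) %ₘ p i).coeff j,
      fun i j => ((∏ j' ∈ Finset.univ.erase i, p j' ^ k j') %ₘ p i).coeff j⟩, ?_⟩
    · ext g
      simp only [Phi, Set.mem_setOf_eq, hβ, Set.mem_univ_pi, rmap]
      refine forall_congr' fun i => ?_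
      have hu : polyOf q t (fun j => ((A /ₘ p i ^ k i) %ₘ p i).coeff j)
          = (A /ₘ p i ^ k i) %ₘ p i := polyOf_coeff_fun _ (by
        have := natDegree_modByMonic_lt (A /ₘ p i ^ k i) (hmonic i) (hpne1 i)
        rw [hdeg i] at this; exact this)
      have hW : polyOf q t
            (fun j => ((∏ j' ∈ Finset.univ.erase i, p j' ^ k j') %ₘ p i).coeff j)
          = (∏ j' ∈ Finset.univ.erase i, p j' ^ k j') %ₘ p i := polyOf_coeff_fun _ (by
        have := natDegree_modByMonic_lt (∏ j' ∈ Finset.univ.erase i, p j' ^ k j')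
          (hmonic i) (hpne1 i)
        rw [hdeg i] at this; exact this)
      have hprod : (∏ j', p j' ^ k j')
          = p i ^ k i * ∏ j' ∈ Finset.univ.erase i, p j' ^ k j' :=
        (Finset.mul_prod_erase _ _ (Finset.mem_univ i)).symm
      rw [hu, hW, mod_mul_mod (hmonic i), hprod]
      exact (key (hmonic i) (hdeg i) ht1 A g _ (k i) (kβ i) (a i) (aβ i)
        (hF1 i) (hF2 i) (hA3 i) (hF3 i)).symm
  have hfin : (Set.range (Phi q t d p)).Finite := Set.finite_range _
  refine ⟨hfin.subset hsub, ?_⟩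
  have hcard : Nat.card (LData q t d) = t ^ d * ((q ^ t) ^ d * ((q ^ t) ^ d * (q ^ t) ^ d)) := by
    haveI : Fintype (ZMod q) := ZMod.fintype q
    rw [show LData q t d = ((Fin d → Fin t) × (Fin d → Fin (q ^ t)) ×
        (Fin d → Fin t → ZMod q) × (Fin d → Fin t → ZMod q)) from rfl,
      Nat.card_prod, Nat.card_prod, Nat.card_prod]
    simp only [Nat.card_eq_fintype_card, Fintype.card_fun, Fintype.card_fin, ZMod.card]
  calc 𝓛.ncard ≤ (Set.range (Phi q t d p)).ncard := Set.ncard_le_ncard hsub hfin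
    _ ≤ Nat.card (LData q t d) := by
        rw [← Set.image_univ]
        exact le_trans (Set.ncard_image_le Set.finite_univ)
          (le_of_eq (Set.ncard_univ _))
    _ ≤ q ^ (4 * d * t) := by
        rw [hcard]
        have h1 : t ≤ q ^ t := le_of_lt (Nat.lt_pow_self hq.one_lt)
        calc t ^ d * ((q ^ t) ^ d * ((q ^ t) ^ d * (q ^ t) ^ d))
            ≤ (q ^ t) ^ d * ((q ^ t) ^ d * ((q ^ t) ^ d * (q ^ t) ^ d)) :=
              Nat.mul_le_mul_right _ (Nat.pow_le_pow_left h1 d)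
          _ = q ^ (4 * d * t) := by
              rw [← pow_mul, ← pow_add, ← pow_add, ← pow_add]
              congr 1; ring
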